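/- Let k be a positive integer and ζ a real number with λ_k(ζ) > 1. Then λ_k(ζ) = (w_k(ζ) − k + 1)/k holds if and only if w_1(ζ) = w_2(ζ) = ⋯ = w_k(ζ). -/

import Mathlib

/-- Distance from a real number to the nearest integer. -/
noncomputable def distNearestInt (a : ℝ) : ℝ := |a - round a|

/-- `max_{1 ≤ j ≤ k} ‖ζ^j x‖` for a positive integer `x`. -/
noncomputable def maxDist (k : ℕ) (ζ : ℝ) (x : ℕ) : ℝ :=
  ⨆ j ∈ Finset.Icc 1 k, distNearestInt (ζ ^ j * x)

/-- The approximation constant `λ_k(ζ)`, as an extended real number in `[0,∞]`. -/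
noncomputable def lambdaConst (k : ℕ) (ζ : ℝ) : EReal :=
  sSup (insert (0 : EReal) {e : EReal | ∃ η : ℝ, e = (η : EReal) ∧
    {x : ℕ | 0 < x ∧ 0 < maxDist k ζ x ∧ maxDist k ζ x ≤ (x : ℝ) ^ (-η)}.Infinite})

/-- The uniform approximation constant `λ̂_k(ζ)`, as an extended real number in `[0,∞]`. -/
noncomputable def lambdaHatConst (k : ℕ) (ζ : ℝ) : EReal :=
  sSup (insert (0 : EReal) {e : EReal | ∃ η : ℝ, e = (η : EReal) ∧
    ∃ X₀ : ℝ, ∀ X : ℝ, X₀ ≤ X → ∃ x : ℕ, 1 ≤ x ∧ (x : ℝ) ≤ X ∧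
      0 < maxDist k ζ x ∧ maxDist k ζ x ≤ X ^ (-η)})

/-- The dual approximation constant `w_k(ζ)`, as an extended real number in `[0,∞]`. -/
noncomputable def wConst (k : ℕ) (ζ : ℝ) : EReal :=
  sSup (insert (0 : EReal) {e : EReal | ∃ ν : ℝ, e = (ν : EReal) ∧
    ∀ X₀ : ℝ, ∃ X : ℝ, X₀ ≤ X ∧ ∃ p : Fin (k + 1) → ℤ,
      (∀ j, |(p j : ℝ)| ≤ X) ∧
      0 < |∑ j : Fin (k + 1), ζ ^ (j : ℕ) * (p j : ℝ)| ∧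
      |∑ j : Fin (k + 1), ζ ^ (j : ℕ) * (p j : ℝ)| ≤ X ^ (-ν)})

/-- The uniform dual approximation constant `ŵ_k(ζ)`, as an extended real number in `[0,∞]`. -/
noncomputable def wHatConst (k : ℕ) (ζ : ℝ) : EReal :=
  sSup (insert (0 : EReal) {e : EReal | ∃ ν : ℝ, e = (ν : EReal) ∧
    ∃ X₀ : ℝ, ∀ X : ℝ, X₀ ≤ X → ∃ p : Fin (k + 1) → ℤ,
      (∀ j, |(p j : ℝ)| ≤ X) ∧
      0 < |∑ j : Fin (k + 1), ζ ^ (j : ℕ) * (p j : ℝ)| ∧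
      |∑ j : Fin (k + 1), ζ ^ (j : ℕ) * (p j : ℝ)| ≤ X ^ (-ν)})

lemma dni_nonneg (a : ℝ) : 0 ≤ distNearestInt a := abs_nonneg _

lemma dni_le_half (a : ℝ) : distNearestInt a ≤ 1/2 := abs_sub_round a

lemma dni_le (a : ℝ) (m : ℤ) : distNearestInt a ≤ |a - m| := round_le a m

lemma dni_pos {a : ℝ} (h : Irrational a) : 0 < distNearestInt a := by
  rw [distNearestInt, abs_pos, sub_ne_zero]
  exact h.ne_int _

lemma iSup_prop_le {p : Prop} {c d : ℝ} (hd : 0 ≤ d) (h : p → c ≤ d) : (⨆ _ : p, c) ≤ d := by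
  by_cases hp : p
  · haveI : Nonempty p := ⟨hp⟩
    rw [ciSup_const]
    exact h hp
  · haveI : IsEmpty p := ⟨hp⟩
    rw [Real.iSup_of_isEmpty]
    exact hd

lemma iSup_prop_nonneg {p : Prop} {c : ℝ} (hc : 0 ≤ c) : 0 ≤ ⨆ _ : p, c := by
  by_cases hp : p
  · haveI : Nonempty p := ⟨hp⟩
    rw [ciSup_const]
    exact hc
  · haveI : IsEmpty p := ⟨hp⟩
    rw [Real.iSup_of_isEmpty]

lemma maxDist_bdd (k : ℕ) (ζ : ℝ) (x : ℕ) :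
    BddAbove (Set.range fun j => ⨆ _ : j ∈ Finset.Icc 1 k, distNearestInt (ζ ^ j * x)) := by
  refine ⟨1/2, ?_⟩
  rintro y ⟨j, rfl⟩
  exact iSup_prop_le (by norm_num) fun _ => dni_le_half _

lemma maxDist_le {k : ℕ} {ζ : ℝ} {x : ℕ} {c : ℝ} (hc : 0 ≤ c)
    (h : ∀ j ∈ Finset.Icc 1 k, distNearestInt (ζ ^ j * x) ≤ c) : maxDist k ζ x ≤ c :=
  Real.iSup_le (fun j => iSup_prop_le hc (h j)) hc

lemma le_maxDist {k : ℕ} {ζ : ℝ} {x : ℕ} {j : ℕ} (hj : j ∈ Finset.Icc 1 k) :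
    distNearestInt (ζ ^ j * x) ≤ maxDist k ζ x := by
  have h2 := le_ciSup (maxDist_bdd k ζ x) j
  refine le_trans ?_ h2
  haveI : Nonempty (j ∈ Finset.Icc 1 k) := ⟨hj⟩
  exact le_of_eq ciSup_const.symm

lemma maxDist_nonneg (k : ℕ) (ζ : ℝ) (x : ℕ) : 0 ≤ maxDist k ζ x :=
  Real.iSup_nonneg fun _ => iSup_prop_nonneg (dni_nonneg _)

lemma exists_of_maxDist_pos {k : ℕ} {ζ : ℝ} {x : ℕ} (h : 0 < maxDist k ζ x) :
    ∃ j ∈ Finset.Icc 1 k, 0 < distNearestInt (ζ ^ j * x) := by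
  by_contra hc
  push_neg at hc
  have : maxDist k ζ x ≤ 0 := maxDist_le le_rfl fun j hj => hc j hj
  linarith

lemma maxDist_pos {k : ℕ} {ζ : ℝ} {x : ℕ} (hk : 0 < k) (hζ : Irrational ζ) (hx : 0 < x) :
    0 < maxDist k ζ x := by
  refine lt_of_lt_of_le ?_ (le_maxDist (j := 1) (Finset.mem_Icc.2 ⟨le_rfl, hk⟩))
  rw [pow_one]
  exact dni_pos (mul_comm (x:ℝ) ζ ▸ hζ.natCast_mul hx.ne')

def Plam (k : ℕ) (ζ : ℝ) (η : ℝ) : Prop :=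
  {x : ℕ | 0 < x ∧ 0 < maxDist k ζ x ∧ maxDist k ζ x ≤ (x : ℝ) ^ (-η)}.Infinite

def Pw (k : ℕ) (ζ : ℝ) (ν : ℝ) : Prop :=
  ∀ X₀ : ℝ, ∃ X : ℝ, X₀ ≤ X ∧ ∃ p : Fin (k + 1) → ℤ,
      (∀ j, |(p j : ℝ)| ≤ X) ∧
      0 < |∑ j : Fin (k + 1), ζ ^ (j : ℕ) * (p j : ℝ)| ∧
      |∑ j : Fin (k + 1), ζ ^ (j : ℕ) * (p j : ℝ)| ≤ X ^ (-ν)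

lemma lambdaConst_def (k : ℕ) (ζ : ℝ) :
    lambdaConst k ζ = sSup (insert (0 : EReal) {e : EReal | ∃ η : ℝ, e = (η : EReal) ∧ Plam k ζ η}) := rfl

lemma wConst_def (k : ℕ) (ζ : ℝ) :
    wConst k ζ = sSup (insert (0 : EReal) {e : EReal | ∃ ν : ℝ, e = (ν : EReal) ∧ Pw k ζ ν}) := rfl

lemma lambda_nonneg (k : ℕ) (ζ : ℝ) : 0 ≤ lambdaConst k ζ :=
  le_sSup (Set.mem_insert _ _)

lemma w_nonneg (k : ℕ) (ζ : ℝ) : 0 ≤ wConst k ζ :=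
  le_sSup (Set.mem_insert _ _)

lemma Plam.le_lambda {k : ℕ} {ζ : ℝ} {η : ℝ} (h : Plam k ζ η) : (η : EReal) ≤ lambdaConst k ζ :=
  le_sSup (Set.mem_insert_of_mem _ ⟨η, rfl, h⟩)

lemma lambda_le {k : ℕ} {ζ : ℝ} {c : EReal} (h0 : 0 ≤ c)
    (h : ∀ η : ℝ, Plam k ζ η → (η : EReal) ≤ c) : lambdaConst k ζ ≤ c := by
  rw [lambdaConst_def]
  refine sSup_le ?_
  rintro e (rfl | ⟨η, rfl, hη⟩)
  · exact h0
  · exact h η hη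

lemma Pw.le_w {k : ℕ} {ζ : ℝ} {ν : ℝ} (h : Pw k ζ ν) : (ν : EReal) ≤ wConst k ζ :=
  le_sSup (Set.mem_insert_of_mem _ ⟨ν, rfl, h⟩)

lemma exists_Plam_of_lt {k : ℕ} {ζ : ℝ} {r : ℝ} (hr : 0 ≤ r)
    (h : (r : EReal) < lambdaConst k ζ) : ∃ η : ℝ, r < η ∧ Plam k ζ η := by
  rw [lambdaConst_def, lt_sSup_iff] at h
  obtain ⟨e, he, hlt⟩ := h
  rcases he with rfl | ⟨η, rfl, hη⟩
  · exact absurd hlt (by exact_mod_cast not_lt.2 hr)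
  · exact ⟨η, by exact_mod_cast hlt, hη⟩

lemma exists_Pw_of_lt {k : ℕ} {ζ : ℝ} {r : ℝ} (hr : 0 ≤ r)
    (h : (r : EReal) < wConst k ζ) : ∃ ν : ℝ, r < ν ∧ Pw k ζ ν := by
  rw [wConst_def, lt_sSup_iff] at h
  obtain ⟨e, he, hlt⟩ := h
  rcases he with rfl | ⟨ν, rfl, hν⟩
  · exact absurd hlt (by exact_mod_cast not_lt.2 hr)
  · exact ⟨ν, by exact_mod_cast hlt, hν⟩
lemma irrational_of_one_lt_lambda {k : ℕ} {ζ : ℝ} (h1 : ∃ η : ℝ, 1 < η ∧ Plam k ζ η) :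
    Irrational ζ := by
  obtain ⟨η, hη1, hP⟩ := h1
  by_contra hir
  rw [Irrational] at hir
  push_neg at hir
  obtain ⟨q, hq⟩ := hir
  have hqd : 0 < (q.den : ℝ) := by exact_mod_cast q.pos
  refine hP (Set.Finite.subset (Set.finite_Iic (q.den ^ k)) ?_)
  rintro x ⟨hx, hpos, hle⟩
  obtain ⟨j, hj, hdj⟩ := exists_of_maxDist_pos hpos
  rw [Finset.mem_Icc] at hj
  set m : ℤ := round (ζ ^ j * x) with hm
  have hζ : ζ = (q.num : ℝ) / (q.den : ℝ) := by rw [← hq, Rat.cast_def]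
  have hqdj : (0:ℝ) < (q.den:ℝ) ^ j := by positivity
  have hrepr : ζ ^ j * x - m = ((q.num ^ j * x - m * q.den ^ j : ℤ) : ℝ) / (q.den:ℝ) ^ j := by
    rw [hζ]
    push_cast
    field_simp
    ring
    rw [mul_assoc (_ ^ j) ((q.den:ℝ)^j), ← mul_pow, mul_inv_cancel₀ hqd.ne', one_pow, mul_one]
  have hN : (q.num ^ j * x - m * q.den ^ j : ℤ) ≠ 0 := by
    intro h0
    rw [distNearestInt, ← hm, hrepr, h0] at hdj
    simp at hdj
  have h1N : (1:ℝ) ≤ |((q.num ^ j * x - m * q.den ^ j : ℤ) : ℝ)| := by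
    rw [← Int.cast_abs]
    exact_mod_cast Int.one_le_abs hN
  have hlow : ((q.den:ℝ) ^ k)⁻¹ ≤ distNearestInt (ζ ^ j * x) := by
    rw [distNearestInt, ← hm, hrepr, abs_div, abs_of_pos hqdj]
    have hjk : (q.den:ℝ) ^ j ≤ (q.den:ℝ) ^ k :=
      pow_le_pow_right₀ (by exact_mod_cast q.pos) hj.2
    calc ((q.den:ℝ) ^ k)⁻¹ ≤ ((q.den:ℝ) ^ j)⁻¹ := by
          apply inv_anti₀ hqdj hjk
      _ ≤ |((q.num ^ j * x - m * q.den ^ j : ℤ) : ℝ)| / (q.den:ℝ) ^ j := by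
          rw [le_div_iff₀ hqdj, inv_mul_cancel₀ hqdj.ne']
          exact h1N
  have hup : distNearestInt (ζ ^ j * x) ≤ ((x:ℝ))⁻¹ := by
    have h1x : (1:ℝ) ≤ (x:ℝ) := by exact_mod_cast hx
    calc distNearestInt (ζ ^ j * x) ≤ maxDist k ζ x := le_maxDist (Finset.mem_Icc.2 hj)
      _ ≤ (x:ℝ) ^ (-η) := hle
      _ ≤ (x:ℝ) ^ (-1 : ℝ) := Real.rpow_le_rpow_of_exponent_le h1x (by linarith)
      _ = ((x:ℝ))⁻¹ := Real.rpow_neg_one _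
  have hxle : (x:ℝ) ≤ (q.den:ℝ) ^ k := by
    have hxpos : (0:ℝ) < x := by exact_mod_cast hx
    have := le_trans hlow hup
    rw [inv_le_inv₀ (by positivity) hxpos] at this
    exact this
  simpa using (by exact_mod_cast hxle : x ≤ q.den ^ k)

lemma Pw_mono {j k : ℕ} (hjk : j ≤ k) {ζ ν : ℝ} (h : Pw j ζ ν) : Pw k ζ ν := by
  intro X₀
  obtain ⟨X, hX, p, hp, hpos, hle⟩ := h (max X₀ 1)
  have hX1 : (1:ℝ) ≤ X := le_trans (le_max_right _ _) hX
  set F : ℕ → ℝ := fun m => ζ ^ m * ((if hm : m < j + 1 then p ⟨m, hm⟩ else 0 : ℤ) : ℝ) with hF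
  have hsum : ∑ i : Fin (k+1), ζ ^ (i:ℕ) *
      ((if hi : (i:ℕ) < j + 1 then p ⟨(i:ℕ), hi⟩ else 0 : ℤ) : ℝ)
      = ∑ i : Fin (j+1), ζ ^ (i:ℕ) * (p i : ℝ) := by
    calc ∑ i : Fin (k+1), ζ ^ (i:ℕ) * ((if hi : (i:ℕ) < j + 1 then p ⟨(i:ℕ), hi⟩ else 0 : ℤ) : ℝ)
        = ∑ i : Fin (k+1), F (i:ℕ) := rfl
      _ = ∑ m ∈ Finset.range (k+1), F m := Fin.sum_univ_eq_sum_range F (k+1)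
      _ = ∑ m ∈ Finset.range (j+1), F m := by
          refine (Finset.sum_subset (Finset.range_subset_range.2 (by omega)) ?_).symm
          intro m hm hnm
          rw [Finset.mem_range] at hnm
          simp [hF, hnm, show ¬ m ≤ j by omega]
      _ = ∑ i : Fin (j+1), F (i:ℕ) := (Fin.sum_univ_eq_sum_range F (j+1)).symm
      _ = ∑ i : Fin (j+1), ζ ^ (i:ℕ) * (p i : ℝ) := by
          refine Finset.sum_congr rfl fun i _ => ?_
          simp [hF, i.isLt, show ¬ j < (i:ℕ) by have := i.isLt; omega]
  refine ⟨X, le_trans (le_max_left _ _) hX,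
    fun i => if hi : (i:ℕ) < j + 1 then p ⟨(i:ℕ), hi⟩ else 0, fun i => ?_, ?_, ?_⟩
  · simp only
    split_ifs with hi
    · exact hp _
    · simpa using le_trans zero_le_one hX1
  · rw [hsum]; exact hpos
  · rw [hsum]; exact hle

lemma wConst_mono {j k : ℕ} (hjk : j ≤ k) (ζ : ℝ) : wConst j ζ ≤ wConst k ζ := by
  rw [wConst_def j ζ]
  refine sSup_le ?_
  rintro e (rfl | ⟨ν, rfl, hν⟩)
  · exact w_nonneg k ζ
  · exact (Pw_mono hjk hν).le_w
set_option maxHeartbeats 1000000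
lemma low_lemma {k : ℕ} (hk : 0 < k) {ζ : ℝ} (hζ : Irrational ζ) {ν : ℝ} (hν0 : 0 < ν)
    (hP : Pw 1 ζ ν) {η : ℝ} (hη : (k:ℝ) * η < ν - k + 1) : Plam k ζ η := by
  set M : ℝ := |ζ| + 1 with hMdef
  have hM1 : 1 ≤ M := by
    have := abs_nonneg ζ
    simp only [hMdef]
    linarith
  set C : ℝ := k * M ^ (k - 1) with hCdef
  have hC1 : 1 ≤ C := by
    rw [hCdef]
    calc (1:ℝ) = 1 * 1 := by ring
      _ ≤ k * M ^ (k-1) := by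
          apply mul_le_mul (by exact_mod_cast hk) (one_le_pow₀ hM1) zero_le_one
          exact_mod_cast Nat.zero_le k
  set e₀ : ℝ := ν - k + 1 - k * η with he₀def
  have he₀ : 0 < e₀ := by rw [he₀def]; linarith
  set D : ℝ := C ^ (1 / e₀) with hDdef
  have hD0 : 0 ≤ D := Real.rpow_nonneg (by linarith) _
  -- main claim: arbitrarily large elements
  have main : ∀ N : ℕ, ∃ x : ℕ, N < x ∧ x ∈
      {x : ℕ | 0 < x ∧ 0 < maxDist k ζ x ∧ maxDist k ζ x ≤ (x : ℝ) ^ (-η)} := by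
    intro N
    set A : ℝ := max (max (N:ℝ) D) 1 with hAdef
    have hA1 : 1 ≤ A := le_max_right _ _
    set NA : ℕ := ⌈A⌉₊ with hNAdef
    have hNA1 : 1 ≤ NA := Nat.one_le_iff_ne_zero.2 (by
      simp only [hNAdef, ne_eq, Nat.ceil_eq_zero, not_le]; linarith)
    have hne : (Finset.Icc 1 NA).Nonempty := ⟨1, Finset.mem_Icc.2 ⟨le_rfl, hNA1⟩⟩
    set c : ℝ := (Finset.Icc 1 NA).inf' hne (fun n => distNearestInt (ζ * n)) with hcdef
    have hc_pos : 0 < c := by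
      rw [hcdef, Finset.lt_inf'_iff]
      intro n hn
      rw [Finset.mem_Icc] at hn
      exact dni_pos (mul_comm (n:ℝ) ζ ▸ hζ.natCast_mul (by omega))
    have hc_half : c ≤ 1/2 := le_trans (Finset.inf'_le _ (Finset.mem_Icc.2 ⟨le_rfl, hNA1⟩))
      (dni_le_half _)
    -- choose X₀ forcing X^{-ν} < c
    set X₀ : ℝ := max 1 ((1/c) ^ (1/ν) + 1) with hX₀def
    obtain ⟨X, hXX₀, p, hp, hpos, hle⟩ := hP X₀
    have hX1 : (1:ℝ) ≤ X := le_trans (le_max_left _ _) hXX₀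
    have hX0 : (0:ℝ) < X := by linarith
    have hXc : X ^ (-ν) < c := by
      have h1 : (1/c) ^ (1/ν) < X := by
        have := le_trans (le_max_right 1 ((1/c) ^ (1/ν) + 1)) hXX₀
        linarith
      have h2 : (1/c : ℝ) < X ^ ν := by
        calc (1/c : ℝ) = ((1/c) ^ (1/ν)) ^ ν := by
              rw [← Real.rpow_mul (by positivity), one_div_mul_cancel hν0.ne', Real.rpow_one]
          _ < X ^ ν := Real.rpow_lt_rpow (by positivity) h1 hν0
      rw [Real.rpow_neg hX0.le]
      rw [one_div] at h2
      calc (X ^ ν)⁻¹ < ((c:ℝ)⁻¹)⁻¹ := by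
            apply inv_strictAnti₀ (by positivity) h2
        _ = c := inv_inv c
    have hsum2 : ∑ i : Fin 2, ζ ^ (i:ℕ) * (p i : ℝ) = (p 0 : ℝ) + ζ * (p 1 : ℝ) := by
      rw [Fin.sum_univ_two]
      norm_num
    rw [hsum2] at hpos hle
    set δ : ℝ := |(p 0 : ℝ) + ζ * (p 1 : ℝ)| with hδdef
    have hδc : δ < c := lt_of_le_of_lt hle hXc
    have hδ1 : δ < 1 := by linarith
    have hp1 : p 1 ≠ 0 := by
      intro h0
      have hp0 : (p 0 : ℝ) = 0 := by
        have : |(p 0 : ℝ)| < 1 := by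
          rw [hδdef, h0] at hδ1; simpa using hδ1
        exact_mod_cast (by exact_mod_cast Int.abs_lt_one_iff.1 (by exact_mod_cast this) : p 0 = (0:ℤ))
      rw [hδdef, h0, hp0] at hpos
      simp at hpos
    set a : ℕ := (p 1).natAbs with hadef
    have ha1 : 1 ≤ a := Nat.one_le_iff_ne_zero.2 (Int.natAbs_ne_zero.2 hp1)
    have ha0 : (0:ℝ) < a := by exact_mod_cast ha1
    have hcast : (a:ℝ) = |(p 1 : ℝ)| := by
      simp only [hadef, Nat.cast_natAbs, Int.cast_abs]
    obtain ⟨b, hδab⟩ : ∃ b : ℤ, |ζ * (a:ℝ) - (b:ℝ)| = δ := by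
      rcases le_or_gt 0 (p 1) with hsgn | hsgn
      · refine ⟨-(p 0), ?_⟩
        rw [hδdef, hcast, abs_of_nonneg (by exact_mod_cast hsgn : (0:ℝ) ≤ (p 1 : ℝ))]
        push_cast
        have h' : ζ * (p 1 : ℝ) - (-(p 0 : ℝ)) = (p 0 : ℝ) + ζ * (p 1 : ℝ) := by ring
        rw [h']
      · refine ⟨p 0, ?_⟩
        rw [hδdef, hcast, abs_of_nonpos (by exact_mod_cast hsgn.le : (p 1 : ℝ) ≤ 0)]
        push_cast
        have h' : ζ * (-(p 1 : ℝ)) - (p 0 : ℝ) = -((p 0 : ℝ) + ζ * (p 1 : ℝ)) := by ring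
        rw [h', abs_neg]
    have haA : A < a := by
      by_contra hle'
      push_neg at hle'
      have haNA : a ≤ NA := by
        have : (a:ℝ) ≤ (NA:ℝ) := le_trans hle' (Nat.le_ceil A)
        exact_mod_cast this
      have : c ≤ distNearestInt (ζ * a) := Finset.inf'_le _ (Finset.mem_Icc.2 ⟨ha1, haNA⟩)
      have h2 : distNearestInt (ζ * a) ≤ δ := hδab ▸ dni_le _ b
      linarith
    have hax : (a:ℝ) ≤ X := by
      calc (a:ℝ) = |(p 1 : ℝ)| := hcast
        _ ≤ X := hp 1
    have hδa : δ ≤ (a:ℝ) ^ (-ν) := by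
      calc δ ≤ X ^ (-ν) := hle
        _ ≤ (a:ℝ) ^ (-ν) := by
            rw [Real.rpow_neg hX0.le, Real.rpow_neg ha0.le]
            exact inv_anti₀ (Real.rpow_pos_of_pos ha0 ν) (Real.rpow_le_rpow ha0.le hax hν0.le)
    have hbM : |(b:ℝ)| ≤ M * a := by
      have h1 : |(b:ℝ)| ≤ |ζ * (a:ℝ)| + |ζ * (a:ℝ) - (b:ℝ)| := by
        calc |(b:ℝ)| = |ζ * (a:ℝ) + -(ζ * (a:ℝ) - (b:ℝ))| := by congr 1; ring
          _ ≤ |ζ * (a:ℝ)| + |-(ζ * (a:ℝ) - (b:ℝ))| := abs_add_le _ _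
          _ = |ζ * (a:ℝ)| + |ζ * (a:ℝ) - (b:ℝ)| := by rw [abs_neg]
      have h2 : |ζ * (a:ℝ)| = |ζ| * a := by rw [abs_mul, abs_of_nonneg ha0.le]
      have h3 : (1:ℝ) ≤ a := by exact_mod_cast ha1
      rw [h2, hδab] at h1
      have : δ ≤ 1 * a := by nlinarith
      calc |(b:ℝ)| ≤ |ζ| * a + δ := h1
        _ ≤ |ζ| * a + 1 * a := by linarith
        _ = M * a := by rw [hMdef]; ring
    refine ⟨a ^ k, ?_, ?_, maxDist_pos hk hζ (by positivity), ?_⟩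
    · have h1 : (N:ℝ) < a := lt_of_le_of_lt (le_trans (le_max_left _ _) (le_max_left _ _)) haA
      have h2 : N < a := by exact_mod_cast h1
      exact lt_of_lt_of_le h2 (Nat.le_self_pow hk.ne' a)
    · positivity
    · -- the main estimate
      refine maxDist_le (Real.rpow_nonneg (by positivity) _) ?_
      intro j hj
      rw [Finset.mem_Icc] at hj
      have hj1 := hj.1
      have hjk := hj.2
      set m' : ℤ := b ^ j * (a:ℤ) ^ (k - j) with hm'def
      have halg : ζ ^ j * ((a:ℕ) ^ k : ℕ) - (m' : ℝ)
          = (a:ℝ) ^ (k - j) * ((ζ * a) ^ j - (b:ℝ) ^ j) := by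
        rw [hm'def]
        push_cast
        have hkj : k - j + j = k := Nat.sub_add_cancel hjk
        have : (a:ℝ) ^ k = (a:ℝ) ^ (k - j) * (a:ℝ) ^ j := by
          rw [← pow_add, hkj]
        rw [this]; ring
      have hgeom : (ζ * a) ^ j - (b:ℝ) ^ j
          = (∑ i ∈ Finset.range j, (ζ * a) ^ i * (b:ℝ) ^ (j - 1 - i)) * (ζ * a - b) :=
        (geom_sum₂_mul (ζ * a) (b:ℝ) j).symm
      have hsum_bd : |∑ i ∈ Finset.range j, (ζ * a) ^ i * (b:ℝ) ^ (j - 1 - i)|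
          ≤ j * (M * a) ^ (j - 1) := by
        calc |∑ i ∈ Finset.range j, (ζ * a) ^ i * (b:ℝ) ^ (j - 1 - i)|
            ≤ ∑ i ∈ Finset.range j, |(ζ * a) ^ i * (b:ℝ) ^ (j - 1 - i)| :=
              Finset.abs_sum_le_sum_abs _ _
          _ ≤ ∑ _i ∈ Finset.range j, (M * a) ^ (j - 1) := by
              refine Finset.sum_le_sum fun i hi => ?_
              rw [Finset.mem_range] at hi
              rw [abs_mul, abs_pow, abs_pow, abs_mul]
              have hζa : |ζ| * |(a:ℝ)| ≤ M * a := by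
                rw [abs_of_nonneg ha0.le]
                have : |ζ| ≤ M := by rw [hMdef]; linarith
                nlinarith
              have hMa0 : (0:ℝ) ≤ M * a := by positivity
              calc (|ζ| * |(a:ℝ)|) ^ i * |(b:ℝ)| ^ (j - 1 - i)
                  ≤ (M * a) ^ i * (M * a) ^ (j - 1 - i) := by
                    apply mul_le_mul (pow_le_pow_left₀ (by positivity) hζa i)
                      (pow_le_pow_left₀ (abs_nonneg _) hbM _) (by positivity) (by positivity)
                _ = (M * a) ^ (j - 1) := by
                    have hij : i + (j - 1 - i) = j - 1 := by omega
                    rw [← pow_add, hij]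
          _ = j * (M * a) ^ (j - 1) := by rw [Finset.sum_const, Finset.card_range]; ring
      have hdist : distNearestInt (ζ ^ j * ((a ^ k : ℕ) : ℝ)) ≤ C * (a:ℝ) ^ (k-1) * δ := by
        calc distNearestInt (ζ ^ j * ((a ^ k : ℕ) : ℝ)) ≤ |ζ ^ j * ((a ^ k : ℕ) : ℝ) - m'| :=
              dni_le _ m'
          _ = (a:ℝ) ^ (k - j) * |(ζ * a) ^ j - (b:ℝ) ^ j| := by
              rw [halg, abs_mul, abs_of_nonneg (by positivity : (0:ℝ) ≤ (a:ℝ) ^ (k-j))]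
          _ = (a:ℝ) ^ (k - j) * (|∑ i ∈ Finset.range j, (ζ * a) ^ i * (b:ℝ) ^ (j - 1 - i)|
                * |ζ * a - b|) := by rw [hgeom, abs_mul]
          _ ≤ (a:ℝ) ^ (k - j) * ((j * (M * a) ^ (j - 1)) * δ) := by
              apply mul_le_mul_of_nonneg_left _ (by positivity)
              rw [hδab]
              apply mul_le_mul_of_nonneg_right hsum_bd (hδab ▸ abs_nonneg _)
          _ = (j * M ^ (j-1)) * ((a:ℝ) ^ (k - j) * (a:ℝ) ^ (j - 1)) * δ := by
              rw [mul_pow]; ring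
          _ = (j * M ^ (j-1)) * (a:ℝ) ^ (k - 1) * δ := by
              have hkj1 : k - j + (j - 1) = k - 1 := by omega
              rw [← pow_add, hkj1]
          _ ≤ C * (a:ℝ) ^ (k-1) * δ := by
              apply mul_le_mul_of_nonneg_right _ (hδab ▸ abs_nonneg _)
              apply mul_le_mul_of_nonneg_right _ (by positivity)
              rw [hCdef]
              apply mul_le_mul (by exact_mod_cast hjk)
                (pow_le_pow_right₀ hM1 (by omega)) (by positivity) (by positivity)
      -- now convert to rpow estimate
      have haD : D < a := lt_of_le_of_lt (le_trans (le_max_right _ _) (le_max_left _ _)) haA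
      have hCa : C ≤ (a:ℝ) ^ e₀ := by
        calc C = (C ^ (1/e₀ : ℝ)) ^ (e₀ : ℝ) := by
              rw [← Real.rpow_mul (by linarith), one_div_mul_cancel he₀.ne', Real.rpow_one]
          _ ≤ (a:ℝ) ^ e₀ := Real.rpow_le_rpow hD0 haD.le he₀.le
      have hfin : C * (a:ℝ) ^ (k-1) * δ ≤ ((a:ℝ) ^ k) ^ (-η) := by
        have hstep : C * (a:ℝ) ^ (k-1) * δ ≤ C * (a:ℝ) ^ (((k:ℝ) - 1) - ν) := by
          have h1 : ((a:ℝ)) ^ ((k:ℕ) - 1 : ℕ) = (a:ℝ) ^ (((k:ℝ)) - 1) := by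
            rw [← Real.rpow_natCast (a:ℝ) (k-1)]
            congr 1
            have : ((k - 1 : ℕ) : ℝ) = (k:ℝ) - 1 := by
              have : (1:ℕ) ≤ k := hk
              push_cast [Nat.cast_sub this]
              ring
            exact this
          calc C * (a:ℝ) ^ ((k:ℕ)-1:ℕ) * δ ≤ C * (a:ℝ) ^ ((k:ℕ)-1:ℕ) * (a:ℝ) ^ (-ν) := by
                apply mul_le_mul_of_nonneg_left hδa (by positivity)
            _ = C * (a:ℝ) ^ (((k:ℝ) - 1) - ν) := by
                rw [h1, mul_assoc, ← Real.rpow_add ha0]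
                ring_nf
        calc C * (a:ℝ) ^ (k-1) * δ ≤ C * (a:ℝ) ^ (((k:ℝ) - 1) - ν) := hstep
          _ ≤ (a:ℝ) ^ e₀ * (a:ℝ) ^ (((k:ℝ) - 1) - ν) := by
              apply mul_le_mul_of_nonneg_right hCa (Real.rpow_nonneg ha0.le _)
          _ = (a:ℝ) ^ (e₀ + (((k:ℝ) - 1) - ν)) := (Real.rpow_add ha0 _ _).symm
          _ = (a:ℝ) ^ ((k:ℝ) * (-η)) := by rw [he₀def]; ring_nf
          _ = ((a:ℝ) ^ (k:ℕ)) ^ (-η) := by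
              rw [← Real.rpow_natCast (a:ℝ) k, ← Real.rpow_mul ha0.le]
      calc distNearestInt (ζ ^ j * ((a ^ k : ℕ) : ℝ)) ≤ C * (a:ℝ) ^ (k-1) * δ := hdist
        _ ≤ ((a:ℝ) ^ (k:ℕ)) ^ (-η) := hfin
        _ = (((a ^ k : ℕ) : ℝ)) ^ (-η) := by push_cast; ring_nf
  -- conclude infiniteness
  rw [Plam]
  apply Set.infinite_of_not_bddAbove
  rintro ⟨Nb, hNb⟩
  obtain ⟨x, hlt, hx⟩ := main Nb
  exact absurd (hNb hx) (not_le.2 hlt)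
lemma habs_sub (a b : ℝ) : |a - b| ≤ |a| + |b| := by
  calc |a - b| = |a + -b| := by rw [sub_eq_add_neg]
    _ ≤ |a| + |-b| := abs_add_le _ _
    _ = |a| + |b| := by rw [abs_neg]

lemma up_lemma {k : ℕ} (hk : 0 < k) {ζ : ℝ} (hζ : Irrational ζ) {η : ℝ} (hη : 1 < η)
    (hP : Plam k ζ η) {ν : ℝ} (hν0 : 0 < ν) (hν : ν < (k:ℝ) * η + k - 1) : Pw 1 ζ ν := by
  intro X₀
  set M : ℝ := |ζ| + 1 with hMdef
  have hM1 : 1 ≤ M := by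
    have := abs_nonneg ζ
    simp only [hMdef]; linarith
  have hM0 : 0 < M := by linarith
  set r : ℝ := (k:ℝ) * η + k - 1 with hrdef
  set eps : ℝ := r - ν with hepsdef
  have heps : 0 < eps := by rw [hepsdef]; linarith
  set A₂ : ℝ := M ^ (ν / eps) with hA₂def
  set A : ℝ := max (max X₀ A₂) 1 with hAdef
  have hA1 : 1 ≤ A := le_max_right _ _
  set NA : ℕ := ⌈A⌉₊ with hNAdef
  have hNA1 : 1 ≤ NA := Nat.one_le_iff_ne_zero.2 (by
    simp only [hNAdef, ne_eq, Nat.ceil_eq_zero, not_le]; linarith)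
  have hne : (Finset.Icc 1 NA).Nonempty := ⟨1, Finset.mem_Icc.2 ⟨le_rfl, hNA1⟩⟩
  set c : ℝ := (Finset.Icc 1 NA).inf' hne (fun n => distNearestInt (ζ * n)) with hcdef
  have hc_pos : 0 < c := by
    rw [hcdef, Finset.lt_inf'_iff]
    intro n hn
    rw [Finset.mem_Icc] at hn
    exact dni_pos (mul_comm (n:ℝ) ζ ▸ hζ.natCast_mul (by omega))
  -- choose x in the infinite set, large
  set B : ℝ := max ((4 * M ^ k) ^ (1 / (η - 1))) (A / c) with hBdef
  obtain ⟨x, hxS, hxB'⟩ := hP.exists_gt ⌈B⌉₊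
  obtain ⟨hx0, hmdpos, hmdle⟩ := hxS
  have hxB : B < (x:ℝ) := by
    have h1 : B ≤ (⌈B⌉₊ : ℝ) := Nat.le_ceil B
    have h2 : ((⌈B⌉₊ : ℕ) : ℝ) < (x:ℝ) := by exact_mod_cast hxB'
    linarith
  have hx1 : (1:ℝ) ≤ (x:ℝ) := by exact_mod_cast hx0
  have hxpos : (0:ℝ) < (x:ℝ) := by linarith
  -- smallness of x^(1-η) : 4 M^k x^(1-η) < 1
  have hxsmall : 4 * M ^ k * (x:ℝ) ^ (1 - η) < 1 := by
    have ht1 : (1:ℝ) ≤ 4 * M ^ k := by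
      have : (1:ℝ) ≤ M ^ k := one_le_pow₀ hM1
      linarith
    have h1 : (4 * M ^ k) ^ (1 / (η - 1)) < (x:ℝ) := lt_of_le_of_lt (le_max_left _ _) hxB
    have h2 : 4 * M ^ k < (x:ℝ) ^ (η - 1) := by
      calc 4 * M ^ k = ((4 * M ^ k) ^ (1 / (η - 1))) ^ (η - 1) := by
            rw [← Real.rpow_mul (by linarith), one_div_mul_cancel (by linarith : η - 1 ≠ 0),
              Real.rpow_one]
        _ < (x:ℝ) ^ (η - 1) := Real.rpow_lt_rpow (Real.rpow_nonneg (by linarith) _) h1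
            (by linarith)
    have h3 : (x:ℝ) ^ (1 - η) = ((x:ℝ) ^ (η - 1))⁻¹ := by
      rw [← Real.rpow_neg hxpos.le]; ring_nf
    rw [h3]
    have hp : (0:ℝ) < (x:ℝ) ^ (η - 1) := Real.rpow_pos_of_pos hxpos _
    rw [mul_inv_lt_iff₀ hp, one_mul]
    exact h2
  -- the nearest integers
  set y : ℕ → ℤ := fun j => round (ζ ^ j * (x:ℝ)) with hydef
  set d : ℕ → ℝ := fun j => ζ ^ j * (x:ℝ) - y j with hddef
  have hyd : ∀ j, 1 ≤ j → j ≤ k → |d j| ≤ (x:ℝ) ^ (-η) := by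
    intro j h1 h2
    exact le_trans (le_maxDist (Finset.mem_Icc.2 ⟨h1, h2⟩)) hmdle
  have hdxbound : ∀ j, 1 ≤ j → j ≤ k → |d j| * (x:ℝ) ≤ (x:ℝ) ^ (1 - η) := by
    intro j h1 h2
    calc |d j| * (x:ℝ) ≤ (x:ℝ) ^ (-η) * (x:ℝ) := by
          apply mul_le_mul_of_nonneg_right (hyd j h1 h2) hxpos.le
      _ = (x:ℝ) ^ (1 - η) := by
          rw [show (1 - η : ℝ) = -η + 1 by ring, Real.rpow_add hxpos, Real.rpow_one]
  have hdle1 : ∀ j, 1 ≤ j → j ≤ k → |d j| ≤ 1 := by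
    intro j h1 h2
    calc |d j| ≤ (x:ℝ) ^ (-η) := hyd j h1 h2
      _ ≤ 1 := Real.rpow_le_one_of_one_le_of_nonpos hx1 (by linarith)
  have hMk1 : (1:ℝ) ≤ M ^ k := one_le_pow₀ hM1
  have hζM : |ζ| ≤ M := by simp only [hMdef]; linarith
  have hu0 : (0:ℝ) ≤ (x:ℝ) ^ (1 - η) := Real.rpow_nonneg hxpos.le _
  -- claim 1 : y 1 * y j = x * y (j+1)
  have claim1 : ∀ j, 1 ≤ j → j < k → y 1 * y j = (x:ℤ) * y (j + 1) := by
    intro j h1 h2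
    have hζjMk : |ζ ^ j| ≤ M ^ k := by
      rw [abs_pow]
      calc |ζ| ^ j ≤ M ^ j := pow_le_pow_left₀ (abs_nonneg ζ) hζM j
        _ ≤ M ^ k := pow_le_pow_right₀ hM1 h2.le
    have hζMk : |ζ| ≤ M ^ k := le_trans hζM (le_self_pow₀ hM1 hk.ne')
    have hzer : ((y 1 * y j - (x:ℤ) * y (j+1) : ℤ) : ℝ)
        = -(ζ * x) * d j - d 1 * (ζ ^ j * x) + d 1 * d j + (x:ℝ) * d (j + 1) := by
      have e1 : ((y 1 : ℤ) : ℝ) = ζ * (x:ℝ) - d 1 := by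
        simp only [hddef, pow_one]; ring
      have ej : ((y j : ℤ) : ℝ) = ζ ^ j * (x:ℝ) - d j := by
        simp only [hddef]; ring
      have ej1 : ((y (j+1) : ℤ) : ℝ) = ζ ^ (j+1) * (x:ℝ) - d (j + 1) := by
        simp only [hddef]; ring
      push_cast
      rw [e1, ej, ej1]
      ring
    have t1 : |(-(ζ * (x:ℝ)) * d j)| ≤ M ^ k * (x:ℝ) ^ (1 - η) := by
      rw [abs_mul, abs_neg, abs_mul, abs_of_nonneg hxpos.le]
      calc |ζ| * (x:ℝ) * |d j| = |ζ| * (|d j| * (x:ℝ)) := by ring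
        _ ≤ M ^ k * ((x:ℝ) ^ (1 - η)) := by
            apply mul_le_mul hζMk (hdxbound j h1 h2.le) (by positivity) (by positivity)
    have t2 : |d 1 * (ζ ^ j * (x:ℝ))| ≤ M ^ k * (x:ℝ) ^ (1 - η) := by
      rw [abs_mul, abs_mul, abs_of_nonneg hxpos.le]
      calc |d 1| * (|ζ ^ j| * (x:ℝ)) = |ζ ^ j| * (|d 1| * (x:ℝ)) := by ring
        _ ≤ M ^ k * ((x:ℝ) ^ (1 - η)) := by
            apply mul_le_mul hζjMk (hdxbound 1 le_rfl hk) (by positivity) (by positivity)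
    have t3 : |d 1 * d j| ≤ M ^ k * (x:ℝ) ^ (1 - η) := by
      rw [abs_mul]
      have h1' : |d 1| * |d j| ≤ |d j| * (x:ℝ) := by
        have := hdle1 1 le_rfl hk
        have := abs_nonneg (d j)
        nlinarith
      calc |d 1| * |d j| ≤ |d j| * (x:ℝ) := h1'
        _ ≤ (x:ℝ) ^ (1 - η) := hdxbound j h1 h2.le
        _ ≤ M ^ k * (x:ℝ) ^ (1 - η) := by nlinarith
    have t4 : |(x:ℝ) * d (j+1)| ≤ M ^ k * (x:ℝ) ^ (1 - η) := by
      rw [abs_mul, abs_of_nonneg hxpos.le]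
      calc (x:ℝ) * |d (j+1)| = |d (j+1)| * (x:ℝ) := by ring
        _ ≤ (x:ℝ) ^ (1 - η) := hdxbound (j+1) (by omega) (by omega)
        _ ≤ M ^ k * (x:ℝ) ^ (1 - η) := by nlinarith
    have habs : |((y 1 * y j - (x:ℤ) * y (j+1) : ℤ) : ℝ)| < 1 := by
      rw [hzer]
      have H1 : |(-(ζ * (x:ℝ)) * d j - d 1 * (ζ ^ j * (x:ℝ)) + d 1 * d j + (x:ℝ) * d (j + 1))|
          ≤ |(-(ζ * (x:ℝ))) * d j| + |d 1 * (ζ ^ j * (x:ℝ))| + |d 1 * d j|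
            + |(x:ℝ) * d (j+1)| := by
        have h4 := abs_add_le (-(ζ * (x:ℝ)) * d j - d 1 * (ζ ^ j * (x:ℝ)) + d 1 * d j)
          ((x:ℝ) * d (j + 1))
        have h5 := abs_add_le (-(ζ * (x:ℝ)) * d j - d 1 * (ζ ^ j * (x:ℝ))) (d 1 * d j)
        have h6 := habs_sub (-(ζ * (x:ℝ)) * d j) (d 1 * (ζ ^ j * (x:ℝ)))
        linarith
      have ht1 : |(-(ζ * (x:ℝ))) * d j| ≤ M ^ k * (x:ℝ) ^ (1 - η) := t1
      linarith [t2, t3, t4, hxsmall]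
    have h' : |y 1 * y j - (x:ℤ) * y (j+1)| < 1 := by
      exact_mod_cast (by rwa [← Int.cast_abs] at habs :
        ((|y 1 * y j - (x:ℤ) * y (j+1)| : ℤ) : ℝ) < 1)
    have h0 : y 1 * y j - (x:ℤ) * y (j+1) = 0 := Int.abs_lt_one_iff.1 h'
    exact sub_eq_zero.1 h0
  -- claim 2 : (y 1)^j = x^(j-1) * y j
  have claim2 : ∀ j, 1 ≤ j → j ≤ k → (y 1) ^ j = (x:ℤ) ^ (j - 1) * y j := by
    intro j h1
    induction j, h1 using Nat.le_induction with
    | base => intro _; simp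
    | succ n hn ih =>
        intro hnk
        have e1 := ih (by omega)
        have e2 := claim1 n hn (by omega)
        calc (y 1) ^ (n+1) = (y 1) ^ n * y 1 := pow_succ _ _
          _ = ((x:ℤ) ^ (n-1) * y n) * y 1 := by rw [e1]
          _ = (x:ℤ) ^ (n-1) * (y 1 * y n) := by ring
          _ = (x:ℤ) ^ (n-1) * ((x:ℤ) * y (n+1)) := by rw [e2]
          _ = (x:ℤ) ^ (n+1-1) * y (n+1) := by
              rw [← mul_assoc, ← pow_succ]
              have : n - 1 + 1 = n + 1 - 1 := by omega
              rw [this]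
  -- gcd argument
  have hdvdZ : (x:ℤ) ^ (k-1) ∣ (y 1) ^ k := ⟨y k, claim2 k hk le_rfl⟩
  set bnat : ℕ := (y 1).natAbs with hbnatdef
  have hdvdN : x ^ (k-1) ∣ bnat ^ k := by
    have h' := Int.natAbs_dvd_natAbs.2 hdvdZ
    simpa [Int.natAbs_pow] using h'
  set g : ℕ := Nat.gcd x bnat with hgdef
  have hg0 : 0 < g := Nat.gcd_pos_of_pos_left _ hx0
  set a : ℕ := x / g with hadef
  set bn : ℕ := bnat / g with hbndef
  have hxga : x = g * a := (Nat.mul_div_cancel' (Nat.gcd_dvd_left x bnat)).symm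
  have hbgb : bnat = g * bn := (Nat.mul_div_cancel' (Nat.gcd_dvd_right x bnat)).symm
  have ha1 : 1 ≤ a := by
    rcases Nat.eq_zero_or_pos a with h0 | h' 
    · rw [h0, Nat.mul_zero] at hxga; omega
    · exact h'
  have ha0R : (0:ℝ) < (a:ℝ) := by exact_mod_cast ha1
  have hco : Nat.Coprime a bn := Nat.coprime_div_gcd_div_gcd hg0
  have hdvd2 : a ^ (k-1) ∣ g * bn ^ k := by
    have h1 : (g * a) ^ (k-1) ∣ (g * bn) ^ k := by rw [← hxga, ← hbgb]; exact hdvdN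
    rw [mul_pow, mul_pow] at h1
    have h2 : g ^ k * bn ^ k = g ^ (k-1) * (g * bn ^ k) := by
      rw [← mul_assoc, ← pow_succ]
      have : k - 1 + 1 = k := by omega
      rw [this]
    rw [h2] at h1
    exact (Nat.mul_dvd_mul_iff_left (pow_pos hg0 (k-1))).1 h1
  have hdvdg : a ^ (k-1) ∣ g := (hco.pow (k-1) k).dvd_of_dvd_mul_right hdvd2
  have hga : a ^ (k-1) ≤ g := Nat.le_of_dvd hg0 hdvdg
  have hakx : a ^ k ≤ x := by
    calc a ^ k = a ^ (k-1) * a := by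
          rw [← pow_succ]
          have : k - 1 + 1 = k := by omega
          rw [this]
      _ ≤ g * a := Nat.mul_le_mul_right a hga
      _ = x := hxga.symm
  have hakxR : ((a:ℝ)) ^ k ≤ (x:ℝ) := by exact_mod_cast hakx
  -- define b
  have hgdvdy : (g:ℤ) ∣ y 1 := Int.dvd_natAbs.1 (by exact_mod_cast Nat.gcd_dvd_right x bnat)
  set b : ℤ := y 1 / g with hbdef
  have hyb : y 1 = (g:ℤ) * b := (Int.mul_ediv_cancel' hgdvdy).symm
  have hgx : ((g:ℝ)) * (a:ℝ) = (x:ℝ) := by exact_mod_cast congrArg (Nat.cast : ℕ → ℝ) hxga.symm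
  have hg0R : (0:ℝ) < (g:ℝ) := by exact_mod_cast hg0
  set δ' : ℝ := |ζ * (a:ℝ) - (b:ℝ)| with hδ'def
  have hζab : δ' * (g:ℝ) = |ζ * (x:ℝ) - ((y 1 : ℤ) : ℝ)| := by
    have h' : ζ * (x:ℝ) - ((y 1 : ℤ) : ℝ) = (g:ℝ) * (ζ * (a:ℝ) - (b:ℝ)) := by
      rw [← hgx]
      have : ((y 1 : ℤ) : ℝ) = (g:ℝ) * (b:ℝ) := by exact_mod_cast congrArg (Int.cast : ℤ → ℝ) hyb
      rw [this]
      ring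
    rw [h', abs_mul, abs_of_nonneg hg0R.le, hδ'def]
    ring
  have hd1y : |ζ * (x:ℝ) - ((y 1 : ℤ) : ℝ)| = |d 1| := by
    simp only [hddef, pow_one]
  have hδ'bound : δ' ≤ (a:ℝ) * (x:ℝ) ^ (-η - 1) := by
    have h1 : δ' = |d 1| * ((a:ℝ) / (x:ℝ)) := by
      rw [← hd1y, ← hζab]
      have hgax : (g:ℝ) = (x:ℝ) / (a:ℝ) := by
        field_simp [← hgx]
        exact hgx
      rw [hgax]
      field_simp
    rw [h1]
    calc |d 1| * ((a:ℝ) / (x:ℝ)) ≤ (x:ℝ) ^ (-η) * ((a:ℝ) / (x:ℝ)) := by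
          apply mul_le_mul_of_nonneg_right (hyd 1 le_rfl hk) (by positivity)
      _ = (a:ℝ) * ((x:ℝ) ^ (-η) * ((x:ℝ))⁻¹) := by ring
      _ = (a:ℝ) * (x:ℝ) ^ (-η - 1) := by
          rw [show (-η - 1 : ℝ) = -η + (-1) by ring, Real.rpow_add hxpos, Real.rpow_neg_one]
  have hxe1 : (x:ℝ) ^ (-η - 1) ≤ ((x:ℝ))⁻¹ := by
    rw [← Real.rpow_neg_one (x:ℝ)]
    exact Real.rpow_le_rpow_of_exponent_le hx1 (by linarith)
  have haA : A < (a:ℝ) := by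
    by_contra hle'
    push_neg at hle'
    have haNA : a ≤ NA := by
      have : (a:ℝ) ≤ (NA:ℝ) := le_trans hle' (Nat.le_ceil A)
      exact_mod_cast this
    have h1 : c ≤ distNearestInt (ζ * a) := Finset.inf'_le _ (Finset.mem_Icc.2 ⟨ha1, haNA⟩)
    have h2 : distNearestInt (ζ * a) ≤ δ' := dni_le _ b
    have h3 : δ' ≤ A * ((x:ℝ))⁻¹ := by
      calc δ' ≤ (a:ℝ) * (x:ℝ) ^ (-η - 1) := hδ'bound
        _ ≤ A * ((x:ℝ))⁻¹ := by
            apply mul_le_mul hle' hxe1 (Real.rpow_nonneg hxpos.le _) (by linarith)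
    have h4 : A * ((x:ℝ))⁻¹ < c := by
      have hAc : A / c < (x:ℝ) := lt_of_le_of_lt (le_max_right _ _) hxB
      rw [div_lt_iff₀ hc_pos] at hAc
      rw [mul_inv_lt_iff₀ hxpos]
      linarith [mul_comm c (x:ℝ)]
    linarith
  -- final assembly
  have hδ'pos : 0 < δ' := by
    rw [hδ'def, abs_pos, sub_ne_zero]
    intro hEq
    exact ((mul_comm (a:ℝ) ζ ▸ hζ.natCast_mul (by omega : a ≠ 0)).ne_int b) hEq
  have hδ'1 : δ' ≤ (a:ℝ) := by
    calc δ' ≤ (a:ℝ) * (x:ℝ) ^ (-η - 1) := hδ'bound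
      _ ≤ (a:ℝ) * 1 := by
          apply mul_le_mul_of_nonneg_left _ ha0R.le
          exact Real.rpow_le_one_of_one_le_of_nonpos hx1 (by linarith)
      _ = (a:ℝ) := mul_one _
  have hbMa : |(b:ℝ)| ≤ M * (a:ℝ) := by
    have h1 : |(b:ℝ)| ≤ |ζ * (a:ℝ)| + δ' := by
      calc |(b:ℝ)| = |ζ * (a:ℝ) + -(ζ * (a:ℝ) - (b:ℝ))| := by congr 1; ring
        _ ≤ |ζ * (a:ℝ)| + |-(ζ * (a:ℝ) - (b:ℝ))| := abs_add_le _ _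
        _ = |ζ * (a:ℝ)| + δ' := by rw [abs_neg, ← hδ'def]
    have h2 : |ζ * (a:ℝ)| = |ζ| * (a:ℝ) := by rw [abs_mul, abs_of_nonneg ha0R.le]
    calc |(b:ℝ)| ≤ |ζ| * (a:ℝ) + δ' := by rw [← h2]; exact h1
      _ ≤ |ζ| * (a:ℝ) + 1 * (a:ℝ) := by linarith [hδ'1]
      _ = M * (a:ℝ) := by rw [hMdef]; ring
  refine ⟨M * (a:ℝ), ?_, ![-b, (a:ℕ)], ?_, ?_, ?_⟩
  · have h1 : X₀ ≤ A := le_trans (le_max_left _ _) (le_max_left _ _)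
    have h2 : (a:ℝ) ≤ M * a := le_mul_of_one_le_left ha0R.le hM1
    linarith
  · intro i
    fin_cases i
    · simpa using hbMa
    · simpa using le_mul_of_one_le_left ha0R.le hM1
  · have hsum : ∑ i : Fin 2, ζ ^ (i:ℕ) * ((![-b, ((a:ℕ):ℤ)] i : ℤ) : ℝ)
        = (((-b : ℤ)):ℝ) + ζ * ((a:ℕ):ℝ) := by
      rw [Fin.sum_univ_two]
      norm_num
    rw [hsum]
    have : ((-b : ℤ) : ℝ) + ζ * ((a:ℕ):ℝ) = ζ * (a:ℝ) - (b:ℝ) := by push_cast; ring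
    rw [this, ← hδ'def]
    exact hδ'pos
  · have hsum : ∑ i : Fin 2, ζ ^ (i:ℕ) * ((![-b, ((a:ℕ):ℤ)] i : ℤ) : ℝ)
        = (((-b : ℤ)):ℝ) + ζ * ((a:ℕ):ℝ) := by
      rw [Fin.sum_univ_two]
      norm_num
    rw [hsum]
    have heq : ((-b : ℤ) : ℝ) + ζ * ((a:ℕ):ℝ) = ζ * (a:ℝ) - (b:ℝ) := by push_cast; ring
    rw [heq, ← hδ'def]
    -- δ' ≤ (M a)^{-ν}
    have step1 : δ' ≤ (a:ℝ) * (((a:ℝ)) ^ (k:ℕ)) ^ (-η - 1) := by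
      have hx_ak : (x:ℝ) ^ (-η-1) ≤ (((a:ℝ)) ^ (k:ℕ)) ^ (-η-1) := by
        have hak0 : (0:ℝ) < ((a:ℝ)) ^ (k:ℕ) := by positivity
        rw [show (-η - 1 : ℝ) = -(η + 1) by ring, Real.rpow_neg hxpos.le,
          Real.rpow_neg hak0.le]
        apply inv_anti₀ (Real.rpow_pos_of_pos hak0 _)
        exact Real.rpow_le_rpow hak0.le hakxR (by linarith)
      calc δ' ≤ (a:ℝ) * (x:ℝ) ^ (-η - 1) := hδ'bound
        _ ≤ (a:ℝ) * (((a:ℝ)) ^ (k:ℕ)) ^ (-η - 1) := by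
            apply mul_le_mul_of_nonneg_left hx_ak ha0R.le
    have step2 : (a:ℝ) * (((a:ℝ)) ^ (k:ℕ)) ^ (-η - 1) = (a:ℝ) ^ (-r) := by
      rw [← Real.rpow_natCast (a:ℝ) k, ← Real.rpow_mul ha0R.le]
      rw [show (a:ℝ) * (a:ℝ) ^ ((k:ℝ) * (-η - 1)) = (a:ℝ) ^ (1:ℝ) * (a:ℝ) ^ ((k:ℝ) * (-η - 1))
        by rw [Real.rpow_one], ← Real.rpow_add ha0R]
      congr 1
      rw [hrdef]
      ring
    have step3 : (a:ℝ) ^ (-r) ≤ (M * (a:ℝ)) ^ (-ν) := by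
      rw [Real.mul_rpow hM0.le ha0R.le]
      have h1 : (a:ℝ) ^ (-r) = (a:ℝ) ^ (-eps) * (a:ℝ) ^ (-ν) := by
        rw [← Real.rpow_add ha0R]
        congr 1
        rw [hepsdef]
        ring
      rw [h1]
      apply mul_le_mul_of_nonneg_right _ (Real.rpow_nonneg ha0R.le _)
      -- a^{-eps} ≤ M^{-ν}
      have hMν : M ^ ν = A₂ ^ eps := by
        rw [hA₂def, ← Real.rpow_mul hM0.le, div_mul_cancel₀ _ heps.ne']
      have hA₂a : A₂ ≤ (a:ℝ) := by
        have : A₂ ≤ A := le_trans (le_max_right _ _) (le_max_left _ _)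
        linarith
      have hA₂0 : 0 ≤ A₂ := Real.rpow_nonneg hM0.le _
      have h2 : M ^ ν ≤ (a:ℝ) ^ eps := by
        rw [hMν]
        exact Real.rpow_le_rpow hA₂0 hA₂a heps.le
      rw [Real.rpow_neg ha0R.le, Real.rpow_neg hM0.le]
      exact inv_anti₀ (Real.rpow_pos_of_pos hM0 _) h2
    calc δ' ≤ (a:ℝ) * (((a:ℝ)) ^ (k:ℕ)) ^ (-η - 1) := step1
      _ = (a:ℝ) ^ (-r) := step2
      _ ≤ (M * (a:ℝ)) ^ (-ν) := step3
lemma ftop {k : ℕ} (hk : 0 < k) :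
    ((⊤:EReal) - ((k:ℝ):EReal) + 1) / ((k:ℝ):EReal) = ⊤ := by
  rw [EReal.top_sub_coe, show ((⊤:EReal) + 1) = ⊤ from EReal.top_add_of_ne_bot (EReal.coe_ne_bot 1)]
  exact EReal.top_div_of_pos_ne_top
    (by exact_mod_cast (by positivity : (0:ℝ) < (k:ℝ))) (EReal.coe_ne_top _)

lemma fcoe (k : ℕ) (s : ℝ) :
    (((s:ℝ):EReal) - ((k:ℝ):EReal) + 1) / ((k:ℝ):EReal) = (((s - k + 1)/k : ℝ) : EReal) := by
  rw [← EReal.coe_sub, show (1:EReal) = ((1:ℝ):EReal) from rfl, ← EReal.coe_add, ← EReal.coe_div]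

lemma ereal_cases {u : EReal} (hu : 0 ≤ u) : u = ⊤ ∨ ∃ s : ℝ, u = (s:EReal) ∧ 0 ≤ s := by
  induction u using EReal.rec with
  | bot => exact absurd hu (by simp)
  | coe s => exact Or.inr ⟨s, rfl, by exact_mod_cast hu⟩
  | top => exact Or.inl rfl

lemma key_lemma {k : ℕ} (hk : 0 < k) {ζ : ℝ} {η₀ : ℝ} (hη₀ : 1 < η₀) (hP₀ : Plam k ζ η₀) :
    lambdaConst k ζ = (wConst 1 ζ - ((k:ℝ):EReal) + 1) / ((k:ℝ):EReal) := by
  have hζ : Irrational ζ := irrational_of_one_lt_lambda ⟨η₀, hη₀, hP₀⟩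
  have hkR : (0:ℝ) < (k:ℝ) := by exact_mod_cast hk
  have hk1 : (1:ℝ) ≤ (k:ℝ) := by exact_mod_cast hk
  set r₀ : ℝ := (k:ℝ) * η₀ + k - 1 with hr₀
  have hr₀1 : 1 < r₀ := by rw [hr₀]; nlinarith
  have hw1 : ∀ ν : ℝ, 0 < ν → ν < r₀ → Pw 1 ζ ν := fun ν h1 h2 =>
    up_lemma hk hζ hη₀ hP₀ h1 h2
  have hw1r : ((r₀:ℝ):EReal) ≤ wConst 1 ζ := by
    by_contra hcon
    push_neg at hcon
    obtain ⟨z, hz1, hz2⟩ := EReal.exists_between_coe_real hcon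
    have hz0 : 0 < z := by
      have h' := lt_of_le_of_lt (w_nonneg 1 ζ) hz1
      exact_mod_cast h'
    exact absurd (hw1 z hz0 (by exact_mod_cast hz2)).le_w (not_le.2 hz1)
  rcases ereal_cases (w_nonneg 1 ζ) with htop | ⟨s, hs, hs0⟩
  · have hlam_top : lambdaConst k ζ = ⊤ := by
      by_contra hne
      have hlt : lambdaConst k ζ < ⊤ := lt_top_iff_ne_top.2 hne
      obtain ⟨c, hc1, _⟩ := EReal.exists_between_coe_real hlt
      set R : ℝ := max ((k:ℝ) * c + k) 1 with hR
      have hR0 : 0 ≤ R := le_trans zero_le_one (le_max_right _ _)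
      have hRlt : ((R:ℝ):EReal) < wConst 1 ζ := htop ▸ EReal.coe_lt_top R
      obtain ⟨ν, hν1, hν2⟩ := exists_Pw_of_lt hR0 hRlt
      have hν0 : 0 < ν := lt_of_lt_of_le (lt_of_lt_of_le zero_lt_one (le_max_right _ _)) hν1.le
      have hccond : (k:ℝ) * c < ν - k + 1 := by
        have h' : (k:ℝ) * c + k ≤ R := le_max_left _ _
        linarith
      exact absurd (low_lemma hk hζ hν0 hν2 hccond).le_lambda (not_le.2 hc1)
    rw [hlam_top, htop, ftop hk]
  · rw [hs, fcoe k s]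
    set t : ℝ := (s - k + 1)/k with ht
    have hsr : r₀ ≤ s := by
      rw [hs] at hw1r
      exact_mod_cast hw1r
    have hs1 : 1 < s := lt_of_lt_of_le hr₀1 hsr
    have ht1 : 1 < t := by
      rw [ht, lt_div_iff₀ hkR]
      have : (k:ℝ) * η₀ + k - 1 ≤ s := by rw [← hr₀]; exact hsr
      nlinarith
    apply le_antisymm
    · apply lambda_le (by exact_mod_cast (by linarith : (0:ℝ) ≤ t))
      intro η hPη
      by_cases hηle : η ≤ 1
      · exact_mod_cast le_of_lt (lt_of_le_of_lt hηle ht1)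
      · push_neg at hηle
        have hkη : (k:ℝ) * η + k - 1 ≤ s := by
          by_contra hcon2
          push_neg at hcon2
          set ν : ℝ := (s + ((k:ℝ) * η + k - 1))/2 with hνdef
          have hνgt : s < ν := by rw [hνdef]; linarith
          have hν0 : 0 < ν := by linarith
          have hνlt : ν < (k:ℝ) * η + k - 1 := by rw [hνdef]; linarith
          have hle' := (up_lemma hk hζ hηle hPη hν0 hνlt).le_w
          rw [hs] at hle'
          have : ν ≤ s := by exact_mod_cast hle'
          linarith
        have : η ≤ t := by
          rw [ht, le_div_iff₀ hkR]
          linarith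
        exact_mod_cast this
    · by_contra hcon
      push_neg at hcon
      obtain ⟨c, hc1, hc2⟩ := EReal.exists_between_coe_real hcon
      have hc2' : c < t := by exact_mod_cast hc2
      have hckk : (k:ℝ) * c + k - 1 < s := by
        rw [ht, lt_div_iff₀ hkR] at hc2'
        linarith
      set R : ℝ := max ((k:ℝ) * c + k - 1) 0 with hR
      have hR0 : 0 ≤ R := le_max_right _ _
      have hRs : R < s := max_lt hckk (by linarith)
      have hRlt : ((R:ℝ):EReal) < wConst 1 ζ := by
        rw [hs]; exact_mod_cast hRs
      obtain ⟨ν, hν1, hν2⟩ := exists_Pw_of_lt hR0 hRlt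
      have hν0 : 0 < ν := lt_of_le_of_lt hR0 hν1
      have hccond : (k:ℝ) * c < ν - k + 1 := by
        have h' : (k:ℝ) * c + k - 1 ≤ R := le_max_left _ _
        linarith
      exact absurd (low_lemma hk hζ hν0 hν2 hccond).le_lambda (not_le.2 hc1)

theorem stmt19 (k : ℕ) (hk : 0 < k) (ζ : ℝ) (h : 1 < lambdaConst k ζ) :
    lambdaConst k ζ = (wConst k ζ - ((k : ℝ) : EReal) + 1) / ((k : ℝ) : EReal) ↔
      ∀ j : ℕ, 1 ≤ j → j ≤ k → wConst j ζ = wConst 1 ζ := by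
  have h1E : ((1:ℝ):EReal) < lambdaConst k ζ := h
  obtain ⟨η₀, hη₀, hP₀⟩ := exists_Plam_of_lt zero_le_one h1E
  have key := key_lemma hk hη₀ hP₀
  have hkR : (0:ℝ) < (k:ℝ) := by exact_mod_cast hk
  constructor
  · intro hEq j hj1 hjk
    have hmono1 : wConst 1 ζ ≤ wConst j ζ := wConst_mono hj1 ζ
    have hmono2 : wConst j ζ ≤ wConst k ζ := wConst_mono hjk ζ
    have hfe : (wConst k ζ - ((k:ℝ):EReal) + 1) / ((k:ℝ):EReal)
        = (wConst 1 ζ - ((k:ℝ):EReal) + 1) / ((k:ℝ):EReal) := hEq.symm.trans key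
    have hkw : wConst k ζ = wConst 1 ζ := by
      rcases ereal_cases (w_nonneg k ζ) with hT | ⟨u, hu, _⟩ <;>
        rcases ereal_cases (w_nonneg 1 ζ) with hT1 | ⟨v, hv, _⟩
      · rw [hT, hT1]
      · rw [hT, hv, ftop hk, fcoe k v] at hfe
        exact absurd hfe (EReal.coe_ne_top _).symm
      · rw [hu, hT1, ftop hk, fcoe k u] at hfe
        exact absurd hfe (EReal.coe_ne_top _)
      · rw [hu, hv, fcoe k u, fcoe k v] at hfe
        have h' : (u - k + 1)/(k:ℝ) = (v - k + 1)/(k:ℝ) := by exact_mod_cast hfe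
        have : u = v := by
          field_simp at h'
          linarith
        rw [hu, hv, this]
    exact le_antisymm (hkw ▸ hmono2) hmono1
  · intro hj
    rw [hj k hk le_rfl]
    exact key
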